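/- arXiv:1301.1555 — 2 statements merged into one kernel-verified Lean document; each statement's English description precedes it below -/
import Mathlib

section
/- Let $e \ge 1$ be an integer, let $(\rho_j)_{j=1}^{N}$ be nonnegative reals with $\sum_{j=1}^{N}\rho_j = 1$, define $\rho(x)=\sum_{j=1}^{N}\rho_j x^{j-1}$ and $g(z)=1-\sum_{i=0}^{e-1}\frac{z^i}{i!}\,\rho^{(i)}(1-z)$. Then $g$ is monotonically nondecreasing on the interval $[0,1]$. -/
open Finset

namespace GMonoAux

/-- The `i`-th derivative of `ρ(x) = ∑ r_j x^(j-1)`, written explicitly. -/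
noncomputable def H (N : ℕ) (r : ℕ → ℝ) (i : ℕ) (y : ℝ) : ℝ :=
  ∑ j ∈ Finset.Icc 1 N, r j * ((j - 1).descFactorial i : ℝ) * y ^ (j - 1 - i)

lemma hasDerivAt_H (N : ℕ) (r : ℕ → ℝ) (i : ℕ) (y : ℝ) :
    HasDerivAt (H N r i) (H N r (i + 1) y) y := by
  have h : HasDerivAt (fun y : ℝ => ∑ j ∈ Finset.Icc 1 N,
      r j * ((j - 1).descFactorial i : ℝ) * y ^ (j - 1 - i))
      (∑ j ∈ Finset.Icc 1 N,
        r j * ((j - 1).descFactorial i : ℝ) * (((j - 1 - i : ℕ) : ℝ) * y ^ (j - 1 - i - 1))) y := by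
    apply HasDerivAt.fun_sum
    intro j _
    exact (hasDerivAt_pow _ y).const_mul _
  have heq : (∑ j ∈ Finset.Icc 1 N,
      r j * ((j - 1).descFactorial i : ℝ) * (((j - 1 - i : ℕ) : ℝ) * y ^ (j - 1 - i - 1)))
      = H N r (i + 1) y := by
    apply Finset.sum_congr rfl
    intro j _
    have hd : (j - 1).descFactorial (i + 1) = (j - 1 - i) * (j - 1).descFactorial i :=
      Nat.descFactorial_succ _ _
    have hexp : j - 1 - (i + 1) = j - 1 - i - 1 := by omega
    rw [hexp, hd]
    push_cast
    ring
  rw [heq] at h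
  exact h

lemma H_nonneg (N : ℕ) (r : ℕ → ℝ) (hr : ∀ j, 0 ≤ r j) (i : ℕ) {y : ℝ} (hy : 0 ≤ y) :
    0 ≤ H N r i y := by
  apply Finset.sum_nonneg
  intro j _
  exact mul_nonneg (mul_nonneg (hr j) (Nat.cast_nonneg _)) (pow_nonneg hy _)

lemma iteratedDeriv_rho (N : ℕ) (r : ℕ → ℝ) (i : ℕ) :
    iteratedDeriv i (fun x : ℝ => ∑ j ∈ Finset.Icc 1 N, r j * x ^ (j - 1)) = H N r i := by
  induction i with
  | zero =>
    funext x
    simp [H]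
  | succ i ih =>
    rw [iteratedDeriv_succ, ih]
    funext y
    exact (hasDerivAt_H N r i y).deriv

/-- The derivative of `g`. -/
lemma hasDerivAt_g (e N : ℕ) (r : ℕ → ℝ) (z : ℝ) :
    HasDerivAt (fun z : ℝ => 1 - ∑ i ∈ Finset.range e,
        z ^ i / (Nat.factorial i : ℝ) * H N r i (1 - z))
      ((e : ℝ) * z ^ (e - 1) / (Nat.factorial e : ℝ) * H N r e (1 - z)) z := by
  set A : ℕ → ℝ := fun i => (i : ℝ) * z ^ (i - 1) / (Nat.factorial i : ℝ) * H N r i (1 - z)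
    with hA
  have hterm : ∀ i : ℕ, HasDerivAt (fun z : ℝ => z ^ i / (Nat.factorial i : ℝ) * H N r i (1 - z))
      (A i - A (i + 1)) z := by
    intro i
    have h1 : HasDerivAt (fun z : ℝ => z ^ i / (Nat.factorial i : ℝ))
        ((i : ℝ) * z ^ (i - 1) / (Nat.factorial i : ℝ)) z :=
      (hasDerivAt_pow i z).div_const _
    have h2 : HasDerivAt (fun z : ℝ => H N r i (1 - z)) (-(H N r (i + 1) (1 - z))) z := by
      have hin : HasDerivAt (fun z : ℝ => 1 - z) (-1 : ℝ) z := by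
        simpa using (hasDerivAt_id z).const_sub 1
      have := (hasDerivAt_H N r i (1 - z)).comp z hin
      rw [mul_neg_one] at this
      exact this
    have h3 := h1.mul h2
    have hAe : A (i + 1) = z ^ i / (Nat.factorial i : ℝ) * H N r (i + 1) (1 - z) := by
      have hfac : (Nat.factorial (i + 1) : ℝ) = ((i : ℝ) + 1) * (Nat.factorial i : ℝ) := by
        rw [Nat.factorial_succ]; push_cast; ring
      have hfi : (Nat.factorial i : ℝ) ≠ 0 := by
        exact_mod_cast Nat.factorial_ne_zero i
      have hi1 : ((i : ℝ) + 1) ≠ 0 := by positivity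
      simp only [hA, Nat.add_sub_cancel, hfac]
      push_cast
      field_simp
    have : (i : ℝ) * z ^ (i - 1) / (Nat.factorial i : ℝ) * H N r i (1 - z)
        + z ^ i / (Nat.factorial i : ℝ) * -(H N r (i + 1) (1 - z)) = A i - A (i + 1) := by
      rw [hAe, hA]; ring
    rw [this] at h3
    exact h3
  have hsum : HasDerivAt (fun z : ℝ => ∑ i ∈ Finset.range e,
      z ^ i / (Nat.factorial i : ℝ) * H N r i (1 - z))
      (∑ i ∈ Finset.range e, (A i - A (i + 1))) z := by
    apply HasDerivAt.fun_sum
    intro i _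
    exact hterm i
  have htel : ∑ i ∈ Finset.range e, (A i - A (i + 1)) = A 0 - A e :=
    Finset.sum_range_sub' A e
  have hA0 : A 0 = 0 := by simp [hA]
  have h := hsum.const_sub 1
  have hval : 1 - 1 = 0 := rfl
  have : -(A 0 - A e) = (e : ℝ) * z ^ (e - 1) / (Nat.factorial e : ℝ) * H N r e (1 - z) := by
    rw [hA0, hA]; ring
  rw [htel] at h
  rw [this] at h
  exact h

end GMonoAux

/-- The function `g(z) = 1 - ∑_{i=0}^{e-1} (z^i / i!) ρ⁽ⁱ⁾(1-z)` of Lemma 1,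
where `ρ(x) = ∑_{j=1}^N ρ_j x^(j-1)` has nonnegative coefficients summing to one
and `e ≥ 1`, is monotonically nondecreasing on `[0,1]`. -/
theorem g_monotoneOn (e N : ℕ) (he : 1 ≤ e) (r : ℕ → ℝ)
    (hr : ∀ j, 0 ≤ r j) (hsum : ∑ j ∈ Finset.Icc 1 N, r j = 1) :
    MonotoneOn
      (fun z : ℝ => 1 - ∑ i ∈ Finset.range e,
        z ^ i / (Nat.factorial i : ℝ) *
          iteratedDeriv i (fun x : ℝ => ∑ j ∈ Finset.Icc 1 N, r j * x ^ (j - 1)) (1 - z))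
      (Set.Icc 0 1) := by
  simp only [GMonoAux.iteratedDeriv_rho N r]
  apply monotoneOn_of_deriv_nonneg (convex_Icc (0 : ℝ) 1)
  · exact fun z _ => (GMonoAux.hasDerivAt_g e N r z).continuousAt.continuousWithinAt
  · intro z _
    exact (GMonoAux.hasDerivAt_g e N r z).differentiableAt.differentiableWithinAt
  · intro z hz
    rw [interior_Icc] at hz
    rw [(GMonoAux.hasDerivAt_g e N r z).deriv]
    have hz0 : (0 : ℝ) ≤ z := le_of_lt hz.1
    have hz1 : (0 : ℝ) ≤ 1 - z := by linarith [hz.2]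
    have hH := GMonoAux.H_nonneg N r hr e hz1
    have : (0 : ℝ) ≤ (e : ℝ) * z ^ (e - 1) / (Nat.factorial e : ℝ) := by positivity
    exact mul_nonneg this hH
end

section
/- Let $L\ge 1$, let $A$ be an $L\times L$ real matrix, let $p_e\in[0,1]$, let $g:\mathbb{R}\to\mathbb{R}$ be differentiable and $f(\cdot;p_e):\mathbb{R}\to\mathbb{R}$ be continuous. For $\mathbf{z}\in\mathbb{R}^L$ write $\mathbf{g}(\mathbf{z})$ and $\mathbf{f}(\mathbf{z};p_e)$ for the componentwise applications of $g$ and $f$, and define the potential function $U(\mathbf{z};p_e)=\mathbf{g}(\mathbf{z})^\top\mathbf{z}-\sum_{\ell=1}^{L}\int_0^{z_\ell} g(u)\,du-\sum_{\ell=1}^{L}\int_0^{(A\mathbf{g}(\mathbf{z}))_\ell} f(u;p_e)\,du$. Then $U(\cdot;p_e)$ is differentiable and its gradient satisfies, for each $\ell$, $\frac{\partial U}{\partial z_\ell}(\mathbf{z};p_e)=g'(z_\ell)\,\Big(z_\ell-\big(A^\top \mathbf{f}(A\mathbf{g}(\mathbf{z});p_e)\big)_\ell\Big)$. -/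
lemma hasDerivAt_primitive {f : ℝ → ℝ} (hf : Continuous f) (x : ℝ) :
    HasDerivAt (fun y => ∫ u in (0:ℝ)..y, f u) (f x) x :=
  intervalIntegral.integral_hasDerivAt_right (hf.intervalIntegrable 0 x)
    (hf.stronglyMeasurableAtFilter _ _) hf.continuousAt


/-- The coupled potential function
`U(z; p_e) = g(z)ᵀ z - ∑_ℓ ∫_0^{z_ℓ} g(u) du - ∑_ℓ ∫_0^{(A g(z))_ℓ} f(u; p_e) du`
is differentiable, with partial derivatives
`∂U/∂z_ℓ = g'(z_ℓ) (z_ℓ - (Aᵀ f(A g(z); p_e))_ℓ)`,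
whenever `g` is differentiable and `f(·; p_e)` is continuous. -/
theorem coupled_potential_gradient (L : ℕ) (hL : 1 ≤ L)
    (A : Matrix (Fin L) (Fin L) ℝ) (pe : ℝ) (hpe : pe ∈ Set.Icc (0 : ℝ) 1)
    (g f : ℝ → ℝ) (hg : Differentiable ℝ g) (hf : Continuous f) :
    let U : (Fin L → ℝ) → ℝ := fun zv =>
      (∑ ℓ, g (zv ℓ) * zv ℓ) - (∑ ℓ, ∫ u in (0 : ℝ)..(zv ℓ), g u)
        - ∑ ℓ, ∫ u in (0 : ℝ)..(A.mulVec (fun m => g (zv m)) ℓ), f u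
    Differentiable ℝ U ∧ ∀ (zv : Fin L → ℝ) (ℓ : Fin L),
      deriv (fun s : ℝ => U (Function.update zv ℓ s)) (zv ℓ)
        = deriv g (zv ℓ) *
            (zv ℓ - A.transpose.mulVec (fun m => f (A.mulVec (fun m' => g (zv m')) m)) ℓ) := by
  intro U
  have hG : ∀ x, HasDerivAt (fun y => ∫ u in (0:ℝ)..y, g u) (g x) x :=
    hasDerivAt_primitive hg.continuous
  have hF : ∀ x, HasDerivAt (fun y => ∫ u in (0:ℝ)..y, f u) (f x) x :=
    hasDerivAt_primitive hf
  have hGd : Differentiable ℝ (fun y => ∫ u in (0:ℝ)..y, g u) := fun x => (hG x).differentiableAt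
  have hFd : Differentiable ℝ (fun y => ∫ u in (0:ℝ)..y, f u) := fun x => (hF x).differentiableAt
  have hproj : ∀ m : Fin L, Differentiable ℝ (fun zv : Fin L → ℝ => zv m) := by
    intro m; fun_prop
  constructor
  · apply Differentiable.sub
    apply Differentiable.sub
    · exact Differentiable.fun_sum fun m _ => (hg.comp (hproj m)).mul (hproj m)
    · exact Differentiable.fun_sum fun m _ => hGd.comp (hproj m)
    · refine Differentiable.fun_sum fun m _ => hFd.comp ?_
      have : (fun zv : Fin L → ℝ => A.mulVec (fun k => g (zv k)) m)
          = fun zv => ∑ k, A m k * g (zv k) := by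
        funext zv; simp [Matrix.mulVec, dotProduct]
      rw [this]
      exact Differentiable.fun_sum fun k _ => (hg.comp (hproj k)).const_mul _
  · intro zv ℓ
    have key : Function.update zv ℓ (zv ℓ) = zv := Function.update_eq_self ℓ zv
    have hupd : ∀ m : Fin L, HasDerivAt (fun s => Function.update zv ℓ s m)
        (if m = ℓ then (1:ℝ) else 0) (zv ℓ) := by
      intro m
      rcases eq_or_ne m ℓ with h | h
      · subst h; simpa [Function.update_self] using (hasDerivAt_id' (zv m))
      · simpa [Function.update_of_ne h, h] using (hasDerivAt_const (zv ℓ) (zv m))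
    have hgm : ∀ m : Fin L, HasDerivAt (fun s => g (Function.update zv ℓ s m))
        (deriv g (zv m) * (if m = ℓ then (1:ℝ) else 0)) (zv ℓ) := by
      intro m
      have := ((hg (Function.update zv ℓ (zv ℓ) m)).hasDerivAt).comp (zv ℓ) (hupd m)
      rwa [key] at this
    -- term 1
    have h1 : HasDerivAt (fun s => ∑ m, g (Function.update zv ℓ s m) * Function.update zv ℓ s m)
        (∑ m, (deriv g (zv m) * (if m = ℓ then (1:ℝ) else 0) * zv m
          + g (zv m) * (if m = ℓ then (1:ℝ) else 0))) (zv ℓ) := by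
      apply HasDerivAt.fun_sum
      intro m _
      have := (hgm m).mul (hupd m)
      rwa [key] at this
    -- term 2
    have h2 : HasDerivAt (fun s => ∑ m, ∫ u in (0:ℝ)..(Function.update zv ℓ s m), g u)
        (∑ m, g (zv m) * (if m = ℓ then (1:ℝ) else 0)) (zv ℓ) := by
      apply HasDerivAt.fun_sum
      intro m _
      have := (hG (Function.update zv ℓ (zv ℓ) m)).comp (zv ℓ) (hupd m)
      rwa [key] at this
    -- term 3
    have hinner : ∀ m : Fin L, HasDerivAt
        (fun s => A.mulVec (fun k => g (Function.update zv ℓ s k)) m)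
        (∑ k, A m k * (deriv g (zv k) * (if k = ℓ then (1:ℝ) else 0))) (zv ℓ) := by
      intro m
      have heq : (fun s => A.mulVec (fun k => g (Function.update zv ℓ s k)) m)
          = fun s => ∑ k, A m k * g (Function.update zv ℓ s k) := by
        funext s; simp [Matrix.mulVec, dotProduct]
      rw [heq]
      exact HasDerivAt.fun_sum fun k _ => (hgm k).const_mul (A m k)
    have h3 : HasDerivAt
        (fun s => ∑ m, ∫ u in (0:ℝ)..(A.mulVec (fun k => g (Function.update zv ℓ s k)) m), f u)
        (∑ m, f (A.mulVec (fun k => g (zv k)) m)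
          * ∑ k, A m k * (deriv g (zv k) * (if k = ℓ then (1:ℝ) else 0))) (zv ℓ) := by
      apply HasDerivAt.fun_sum
      intro m _
      have := (hF (A.mulVec (fun k => g (Function.update zv ℓ (zv ℓ) k)) m)).comp (zv ℓ) (hinner m)
      rwa [key] at this
    have htot := (h1.fun_sub h2).fun_sub h3
    rw [htot.deriv]
    have hT : A.transpose.mulVec (fun m => f (A.mulVec (fun k => g (zv k)) m)) ℓ
        = ∑ m, A m ℓ * f (A.mulVec (fun k => g (zv k)) m) := by
      simp [Matrix.mulVec, dotProduct, Matrix.transpose_apply]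
    rw [hT, mul_sub, Finset.mul_sum]
    simp only [mul_ite, mul_zero, mul_one, ite_mul, zero_mul, Finset.sum_add_distrib,
      Finset.sum_ite_eq', Finset.mem_univ, if_true]
    have hS : ∑ m, f (A.mulVec (fun k => g (zv k)) m) * (A m ℓ * deriv g (zv ℓ))
        = ∑ m, deriv g (zv ℓ) * (A m ℓ * f (A.mulVec (fun k => g (zv k)) m)) :=
      Finset.sum_congr rfl fun m _ => by ring
    rw [hS]
    ring
end
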